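/- arXiv:2411.14779 — 4 statements merged into one kernel-verified Lean document; each statement's English description precedes it below -/
import Mathlib

section
/- Let α₁,…,αₙ be distinct elements of F_q, let v₁,…,vₙ be nonzero elements of F_q, and let C = GRS_k(α,v) = {(v₁f(α₁),…,vₙf(αₙ)) : f ∈ F_q[x], deg f ≤ k-1} with 2k-1 ≤ n. Then the Schur square C^{⋆2} = span{c⋆c' : c,c' ∈ C} (where ⋆ is componentwise product) equals GRS_{2k-1}(α, v⋆v), and in particular dim(C^{⋆2}) = 2k-1. -/
open Polynomial Matrix

lemma mem_grs_iff {F : Type*} [Field F] {n : ℕ} {m : ℕ} (hm : 1 ≤ m) (α w : Fin n → F)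
    (c : Fin n → F) :
    c ∈ Submodule.span F
      {c | ∃ f : Polynomial F, f.natDegree < m ∧ c = fun i => w i * Polynomial.eval (α i) f} ↔
    ∃ f : Polynomial F, f.natDegree < m ∧ c = fun i => w i * Polynomial.eval (α i) f := by
  constructor
  · intro hc
    induction hc using Submodule.span_induction with
    | mem x hx => exact hx
    | zero => exact ⟨0, by simp; omega, by funext i; simp⟩
    | add x y _ _ hx hy =>
      obtain ⟨f, hf, rfl⟩ := hx
      obtain ⟨g, hg, rfl⟩ := hy
      exact ⟨f + g, lt_of_le_of_lt (natDegree_add_le f g) (max_lt hf hg),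
        by funext i; simp [mul_add]⟩
    | smul a x _ hx =>
      obtain ⟨f, hf, rfl⟩ := hx
      exact ⟨Polynomial.C a * f, lt_of_le_of_lt (natDegree_C_mul_le a f) hf,
        by funext i; simp [Pi.smul_apply, smul_eq_mul]; ring⟩
  · intro h
    exact Submodule.subset_span h

lemma grs_eq_span_range {F : Type*} [Field F] {n : ℕ} {m : ℕ} (α w : Fin n → F) :
    Submodule.span F
      {c | ∃ f : Polynomial F, f.natDegree < m ∧ c = fun i => w i * Polynomial.eval (α i) f} =
    Submodule.span F (Set.range fun j : Fin m => fun i => w i * α i ^ (j : ℕ)) := by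
  apply le_antisymm
  · rw [Submodule.span_le]
    rintro c ⟨f, hf, rfl⟩
    have : (fun i => w i * Polynomial.eval (α i) f)
        = ∑ j : Fin m, f.coeff (j : ℕ) • (fun i => w i * α i ^ (j : ℕ)) := by
      funext i
      rw [Polynomial.eval_eq_sum_range' hf]
      rw [Finset.sum_apply]
      rw [← Fin.sum_univ_eq_sum_range (fun j => f.coeff j * α i ^ j)]
      rw [Finset.mul_sum]
      refine Finset.sum_congr rfl fun j _ => ?_
      simp [smul_eq_mul]; ring
    rw [this]
    exact Submodule.sum_mem _ fun j _ =>
      Submodule.smul_mem _ _ (Submodule.subset_span ⟨j, rfl⟩)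
  · rw [Submodule.span_le]
    rintro c ⟨j, rfl⟩
    exact Submodule.subset_span ⟨Polynomial.X ^ (j : ℕ), by simp [j.2], by simp⟩

lemma finrank_span_range {F : Type*} [Field F] {n m : ℕ} (hmn : m ≤ n)
    (α w : Fin n → F) (hα : Function.Injective α) (hw : ∀ i, w i ≠ 0) :
    Module.finrank F
      (Submodule.span F (Set.range fun j : Fin m => fun i => w i * α i ^ (j : ℕ))) = m := by
  set M : Matrix (Fin n) (Fin m) F := Matrix.of fun i j => w i * α i ^ (j : ℕ) with hM
  have hrange : Set.range M.col = Set.range fun j : Fin m => fun i => w i * α i ^ (j : ℕ) := rfl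
  rw [← hrange, ← Matrix.range_mulVecLin]
  have hinj : Function.Injective M.mulVecLin := by
    rw [← LinearMap.ker_eq_bot]
    rw [Submodule.eq_bot_iff]
    intro c hc
    rcases Nat.eq_zero_or_pos m with rfl | hm
    · funext j; exact j.elim0
    simp only [LinearMap.mem_ker, Matrix.mulVecLin_apply] at hc
    set p : Polynomial F := ∑ j : Fin m, Polynomial.C (c j) * Polynomial.X ^ (j : ℕ) with hp
    have heval : ∀ i, p.eval (α i) = 0 := by
      intro i
      have h1 : w i * ∑ j : Fin m, c j * α i ^ (j : ℕ) = 0 := by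
        have := congr_fun hc i
        simp only [Matrix.mulVec, dotProduct, Pi.zero_apply] at this
        rw [Finset.mul_sum, ← this]
        refine Finset.sum_congr rfl fun j _ => ?_
        simp [hM]; ring
      have h2 : ∑ j : Fin m, c j * α i ^ (j : ℕ) = 0 :=
        (mul_eq_zero.1 h1).resolve_left (hw i)
      simp only [hp, eval_finset_sum, eval_mul, eval_C, eval_pow, eval_X]
      exact h2
    have hdeg : p.natDegree < Fintype.card (Fin n) := by
      have : p.natDegree ≤ m - 1 := by
        apply Polynomial.natDegree_sum_le_of_forall_le
        intro j _
        exact le_trans (Polynomial.natDegree_C_mul_le _ _)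
          (by simpa using Nat.le_sub_one_of_lt j.2)
      simp only [Fintype.card_fin]
      omega
    have hp0 : p = 0 := Polynomial.eq_zero_of_natDegree_lt_card_of_eval_eq_zero p hα heval hdeg
    funext j
    have : p.coeff (j : ℕ) = c j := by
      simp only [hp, Polynomial.finset_sum_coeff, Polynomial.coeff_C_mul,
        Polynomial.coeff_X_pow]
      rw [Finset.sum_eq_single j]
      · simp
      · intro j' _ hj'
        simp [Fin.val_eq_val, (Ne.symm hj' : j ≠ j')]
      · simp
    rw [hp0] at this
    simpa using this.symm
  rw [LinearMap.finrank_range_of_inj hinj]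
  simp

/-- The generalized Reed–Solomon code of dimension (at most) `k` with evaluation
points `α` and column multipliers `v`: evaluations of polynomials of degree `≤ k-1`. -/
def grs {F : Type*} [Field F] {n : ℕ} (k : ℕ) (α v : Fin n → F) :
    Submodule F (Fin n → F) :=
  Submodule.span F
    {c | ∃ f : Polynomial F, f.natDegree < k ∧ c = fun i => v i * Polynomial.eval (α i) f}

/-- The Schur square of a linear code: the span of componentwise products of codewords. -/
def schurSq {F : Type*} [Field F] {n : ℕ} (C : Submodule F (Fin n → F)) :
    Submodule F (Fin n → F) :=
  Submodule.span F {x | ∃ c ∈ C, ∃ c' ∈ C, x = c * c'}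

theorem schurSq_grs {F : Type*} [Field F] [Fintype F] {n k : ℕ}
    (hk : 1 ≤ k) (hn : 2 * k - 1 ≤ n) (α v : Fin n → F)
    (hα : Function.Injective α) (hv : ∀ i, v i ≠ 0) :
    schurSq (grs k α v) = grs (2 * k - 1) α (v * v) ∧
      Module.finrank F (schurSq (grs k α v)) = 2 * k - 1 := by
  have heq : schurSq (grs k α v) = grs (2 * k - 1) α (v * v) := by
    apply le_antisymm
    · rw [schurSq, Submodule.span_le]
      rintro x ⟨c, hc, c', hc', rfl⟩
      obtain ⟨f, hf, rfl⟩ := (mem_grs_iff hk α v c).1 hc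
      obtain ⟨g, hg, rfl⟩ := (mem_grs_iff hk α v c').1 hc'
      apply Submodule.subset_span
      refine ⟨f * g, ?_, ?_⟩
      · have := Polynomial.natDegree_mul_le (p := f) (q := g); omega
      · funext i; simp [Pi.mul_apply]; ring
    · rw [grs, grs_eq_span_range, Submodule.span_le]
      rintro x ⟨j, rfl⟩
      set a : ℕ := min (j : ℕ) (k - 1) with ha'
      set b : ℕ := (j : ℕ) - a with hb'
      have hja : a ≤ (j : ℕ) := by omega
      have hab : a + b = (j : ℕ) := by omega
      have ha : a < k := by omega
      have hb : b < k := by have := j.2; omega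
      apply Submodule.subset_span
      refine ⟨(fun i => v i * α i ^ a),
        Submodule.subset_span ⟨Polynomial.X ^ a, by simp [ha], by simp⟩,
        (fun i => v i * α i ^ b),
        Submodule.subset_span ⟨Polynomial.X ^ b, by simp [hb], by simp⟩, ?_⟩
      funext i
      simp only [Pi.mul_apply]
      rw [← hab, pow_add]; ring
  refine ⟨heq, ?_⟩
  rw [heq, grs, grs_eq_span_range]
  exact finrank_span_range hn α (v * v) hα (fun i => mul_ne_zero (hv i) (hv i))
end

section
/- Let q be a prime power, k ≥ 3, 1 ≤ r ≤ k-1, I = {0,…,k} \ {k-r}, V_I = span_{F_q}{x^i : i ∈ I}, and let T = {α₁,…,αₙ} ⊆ F_q with n ≥ 2k such that e_r(α_{i₁},…,α_{i_k}) ≠ 0 for all 1 ≤ i₁ < ⋯ < i_k ≤ n. Then the evaluation code C(T,I) = {(f(α₁),…,f(αₙ)) : f ∈ V_I} is an [n,k] linear code with minimum distance n-k+1. -/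
/-- The span of the monomials `x^i`, `i ∈ I`. -/
noncomputable def monomialSpace (F : Type*) [Field F] (I : Finset ℕ) : Submodule F (Polynomial F) :=
  Submodule.span F ((fun i => (Polynomial.X : Polynomial F) ^ i) '' (I : Set ℕ))

/-- The evaluation code of a space of polynomials at the evaluation points `α`. -/
noncomputable def evalCode {F : Type*} [Field F] {n : ℕ} (α : Fin n → F)
    (V : Submodule F (Polynomial F)) : Submodule F (Fin n → F) :=
  V.map (LinearMap.pi fun i => Polynomial.leval (α i))

open Polynomial Finset

section Aux

variable {F : Type*} [Field F]

lemma aux_lin_indep_X_pow : LinearIndependent F (fun i : ℕ => (X : F[X]) ^ i) := by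
  rw [linearIndependent_iff']
  intro s g h i hi
  have h2 := congrArg (fun p => Polynomial.coeff p i) h
  simpa [Polynomial.finset_sum_coeff, Polynomial.coeff_smul, Polynomial.coeff_X_pow,
    Finset.sum_ite_eq, hi] using h2

lemma aux_monomialSpace_le {k r : ℕ} :
    monomialSpace F ((Finset.range (k + 1)).erase (k - r)) ≤
      Polynomial.degreeLE F k ⊓ LinearMap.ker (Polynomial.lcoeff F (k - r)) := by
  apply Submodule.span_le.mpr
  rintro _ ⟨i, hi, rfl⟩
  simp only [Finset.coe_erase, Set.mem_diff, Finset.mem_coe, Finset.mem_range,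
    Set.mem_singleton_iff] at hi
  refine Submodule.mem_inf.mpr ⟨?_, ?_⟩
  · rw [Polynomial.mem_degreeLE, Polynomial.degree_X_pow]
    exact_mod_cast Nat.lt_succ_iff.mp hi.1
  · rw [LinearMap.mem_ker, Polynomial.lcoeff_apply, Polynomial.coeff_X_pow]
    simp [Ne.symm hi.2]

lemma aux_mem_monomialSpace {k r : ℕ} (hrk : k - r < k + 1) (f : F[X])
    (hdeg : f.natDegree ≤ k) (hc : f.coeff (k - r) = 0) :
    f ∈ monomialSpace F ((Finset.range (k + 1)).erase (k - r)) := by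
  have hrepr : f = ∑ i ∈ (Finset.range (k + 1)).erase (k - r), f.coeff i • X ^ i := by
    have h1 : f = ∑ i ∈ Finset.range (k + 1), f.coeff i • X ^ i := by
      conv_lhs => rw [Polynomial.as_sum_range' f (k + 1) (Nat.lt_succ_of_le hdeg)]
      simp [Polynomial.smul_X_eq_monomial]
    conv_lhs => rw [h1]
    refine (Finset.sum_subset (Finset.erase_subset _ _) ?_).symm
    intro x hx hnx
    have hx' : x = k - r := by
      by_contra hne
      exact hnx (Finset.mem_erase.mpr ⟨hne, hx⟩)
    subst hx'
    rw [hc, zero_smul]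
  rw [hrepr]
  exact Submodule.sum_mem _ fun i hi =>
    Submodule.smul_mem _ _ (Submodule.subset_span ⟨i, hi, rfl⟩)

lemma aux_coeff_prod_X_sub_C {ι : Type*} (s : Finset ι) (v : ι → F) {r : ℕ} (h : r ≤ s.card) :
    (∏ i ∈ s, (X - C (v i))).coeff (s.card - r) =
      (-1) ^ r * ∑ t ∈ s.powersetCard r, ∏ i ∈ t, v i := by
  have h1 : (∏ i ∈ s, (X - C (v i))) = ((s.val.map v).map fun t => X - C t).prod := by
    rw [Multiset.map_map]; rfl
  have hcard : Multiset.card (s.val.map v) = s.card := by simp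
  rw [h1, Multiset.prod_X_sub_C_coeff _ (by rw [hcard]; omega), hcard,
    Nat.sub_sub_self h, Finset.esymm_map_val]

lemma aux_card_roots_le [DecidableEq F] {n k r : ℕ} (hr : 1 ≤ r) (hrk : r ≤ k - 1)
    (hk : 3 ≤ k) {α : Fin n → F} (hα : Function.Injective α)
    (hsym : ∀ s : Finset (Fin n), s.card = k →
      ∑ t ∈ s.powersetCard r, ∏ i ∈ t, α i ≠ 0)
    {f : F[X]} (hf : f ∈ monomialSpace F ((Finset.range (k + 1)).erase (k - r)))
    (hf0 : f ≠ 0) :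
    (Finset.univ.filter fun i => f.eval (α i) = 0).card ≤ k - 1 := by
  have hfW := aux_monomialSpace_le hf
  rw [Submodule.mem_inf, Polynomial.mem_degreeLE, LinearMap.mem_ker] at hfW
  have hfdeg : f.natDegree ≤ k := Polynomial.natDegree_le_iff_degree_le.mpr hfW.1
  have hfc : f.coeff (k - r) = 0 := hfW.2
  by_contra hcon
  push_neg at hcon
  obtain ⟨s, hs_sub, hs_card⟩ :=
    Finset.exists_subset_card_eq
      (show k ≤ (Finset.univ.filter fun i => f.eval (α i) = 0).card by omega)
  have hg_dvd : (∏ i ∈ s, (X - C (α i))) ∣ f := by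
    have h1 : (s.val.map α) ≤ f.roots := by
      rw [Multiset.le_iff_subset (s.nodup.map hα)]
      intro x hx
      obtain ⟨i, hi, rfl⟩ := Multiset.mem_map.mp hx
      have := hs_sub hi
      rw [Finset.mem_filter] at this
      exact (Polynomial.mem_roots hf0).mpr this.2
    calc (∏ i ∈ s, (X - C (α i)))
        = ((s.val.map α).map fun a => X - C a).prod := by rw [Multiset.map_map]; rfl
      _ ∣ (f.roots.map fun a => X - C a).prod :=
          Multiset.prod_dvd_prod_of_le (Multiset.map_le_map h1)
      _ ∣ f := Polynomial.prod_multiset_X_sub_C_dvd f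
  obtain ⟨q, hq⟩ := hg_dvd
  set g : F[X] := ∏ i ∈ s, (X - C (α i)) with hgdef
  have hg_ne : g ≠ 0 := by
    apply Finset.prod_ne_zero_iff.mpr
    intro i _
    exact Polynomial.X_sub_C_ne_zero _
  have hgdeg : g.natDegree = k := by
    rw [hgdef, Polynomial.natDegree_prod _ _ fun i _ => Polynomial.X_sub_C_ne_zero _]
    simp [hs_card]
  have hq_ne : q ≠ 0 := by rintro rfl; rw [mul_zero] at hq; exact hf0 hq
  have hqdeg : q.natDegree = 0 := by
    have := Polynomial.natDegree_mul hg_ne hq_ne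
    rw [← hq] at this
    omega
  have hqC : q = C (q.coeff 0) := Polynomial.eq_C_of_natDegree_eq_zero hqdeg
  have hc_ne : q.coeff 0 ≠ 0 := fun h => hq_ne (by rw [hqC, h, map_zero])
  have hgc : g.coeff (k - r) = (-1) ^ r * ∑ t ∈ s.powersetCard r, ∏ i ∈ t, α i := by
    have := aux_coeff_prod_X_sub_C s α (r := r) (by omega)
    rwa [hs_card] at this
  have : f.coeff (k - r) = g.coeff (k - r) * q.coeff 0 := by
    conv_lhs => rw [hq, hqC]
    rw [Polynomial.coeff_mul_C]
  rw [hfc, hgc] at this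
  exact (mul_ne_zero (mul_ne_zero (pow_ne_zero _ (neg_ne_zero.mpr one_ne_zero))
    (hsym s hs_card)) hc_ne) this.symm

end Aux

theorem evalCode_MDS_of_elem_sym_ne_zero {F : Type*} [Field F] [Fintype F]
    [DecidableEq F] {n k r : ℕ} (hk : 3 ≤ k) (hr : 1 ≤ r) (hrk : r ≤ k - 1)
    (hkn : 2 * k ≤ n)
    (α : Fin n → F) (hα : Function.Injective α)
    (hsym : ∀ s : Finset (Fin n), s.card = k →
      ∑ t ∈ s.powersetCard r, ∏ i ∈ t, α i ≠ 0) :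
    Module.finrank F (evalCode α (monomialSpace F ((Finset.range (k + 1)).erase (k - r)))) = k ∧
      (∀ c ∈ evalCode α (monomialSpace F ((Finset.range (k + 1)).erase (k - r))), c ≠ 0 →
        n - k + 1 ≤ hammingNorm c) ∧
      (∃ c ∈ evalCode α (monomialSpace F ((Finset.range (k + 1)).erase (k - r))), c ≠ 0 ∧
        hammingNorm c = n - k + 1) := by
  set I : Finset ℕ := (Finset.range (k + 1)).erase (k - r) with hI
  set V : Submodule F F[X] := monomialSpace F I with hV
  set ev : F[X] →ₗ[F] (Fin n → F) := LinearMap.pi fun i => Polynomial.leval (α i) with hev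
  have hrk' : k - r < k + 1 := by omega
  have hev_apply : ∀ (f : F[X]) (i : Fin n), ev f i = f.eval (α i) := by
    intro f i; simp [hev]
  -- hamming norm formula
  have hnorm : ∀ f : F[X],
      hammingNorm (ev f) = n - (Finset.univ.filter fun i => f.eval (α i) = 0).card := by
    intro f
    have h1 : hammingNorm (ev f) = (Finset.univ.filter fun i => ¬ f.eval (α i) = 0).card := by
      unfold hammingNorm
      refine congrArg Finset.card (Finset.filter_congr ?_)
      intro i _
      simp [hev_apply]
    have h2 := Finset.card_filter_add_card_filter_not
      (s := (Finset.univ : Finset (Fin n))) (p := fun i => f.eval (α i) = 0)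
    simp only [Finset.card_univ, Fintype.card_fin] at h2
    omega
  -- roots bound
  have hroots : ∀ f ∈ V, f ≠ 0 →
      (Finset.univ.filter fun i => f.eval (α i) = 0).card ≤ k - 1 :=
    fun f hf hf0 => aux_card_roots_le hr hrk hk hα hsym hf hf0
  -- injectivity on V
  have hzero : ∀ f ∈ V, ev f = 0 → f = 0 := by
    intro f hf hf0
    by_contra hne
    have h1 := hroots f hf hne
    have h2 : (Finset.univ.filter fun i => f.eval (α i) = 0) = Finset.univ := by
      apply Finset.filter_true_of_mem
      intro i _
      have := congrFun hf0 i
      rwa [hev_apply] at this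
    rw [h2, Finset.card_univ, Fintype.card_fin] at h1
    omega
  refine ⟨?_, ?_, ?_⟩
  · -- finrank = k
    have hinj : Function.Injective (ev.domRestrict V) := by
      rw [← LinearMap.ker_eq_bot, LinearMap.ker_eq_bot']
      rintro ⟨f, hfV⟩ hf
      exact Subtype.ext (hzero f hfV hf)
    have hrange : evalCode α V = LinearMap.range (ev.domRestrict V) :=
      (LinearMap.range_domRestrict V ev).symm
    rw [hrange, LinearMap.finrank_range_of_inj hinj]
    -- finrank V = k
    have hXpow_inj : Function.Injective (fun i : ℕ => (X : F[X]) ^ i) := by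
      intro i j h
      have := congrArg Polynomial.natDegree h
      simpa using this
    have himg : ((fun i : ℕ => (X : F[X]) ^ i) '' (I : Set ℕ)) =
        ↑(I.image fun i => (X : F[X]) ^ i) := by
      rw [Finset.coe_image]
    have hli : LinearIndependent F ((↑) : (I.image fun i => (X : F[X]) ^ i) → F[X]) := by
      have h1 : LinearIndependent F fun x : (I : Set ℕ) => (X : F[X]) ^ (x : ℕ) :=
        aux_lin_indep_X_pow.comp _ Subtype.val_injective
      have := LinearIndepOn.id_image (v := fun i : ℕ => (X : F[X]) ^ i) (s := (I : Set ℕ)) h1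
      rwa [himg] at this
    have : V = Submodule.span F ↑(I.image fun i => (X : F[X]) ^ i) := by
      rw [hV, monomialSpace, himg]
    rw [this, finrank_span_finset_eq_card hli,
      Finset.card_image_of_injective _ hXpow_inj, hI,
      Finset.card_erase_of_mem (Finset.mem_range.mpr hrk'), Finset.card_range]
    omega
  · -- min distance bound
    rintro c ⟨f, hfV, rfl⟩
    intro hc0
    have hf0 : f ≠ 0 := by rintro rfl; exact hc0 (map_zero ev)
    have := hroots f hfV hf0
    rw [show (LinearMap.pi fun i => Polynomial.leval (α i)) f = ev f from rfl, hnorm f]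
    omega
  · -- existence of min weight codeword
    have h0n : 0 < n := by omega
    have h1n : 1 < n := by omega
    set a : Fin n := ⟨0, h0n⟩ with ha
    set b : Fin n := ⟨1, h1n⟩ with hb
    have htbound : ∀ m ∈ Finset.Ico 2 (k + 1), m < n := by
      intro m hm; rw [Finset.mem_Ico] at hm; omega
    set t : Finset (Fin n) := Finset.attachFin (Finset.Ico 2 (k + 1)) htbound with ht
    have htcard : t.card = k - 1 := by
      rw [ht, Finset.card_attachFin, Nat.card_Ico]
      omega
    have hat : a ∉ t := by
      simp only [ht, Finset.mem_attachFin, ha]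
      simp
    have hbt : b ∉ t := by
      simp only [ht, Finset.mem_attachFin, hb]
      simp
    have hab : a ≠ b := by simp [ha, hb, Fin.ext_iff]
    set s1 : Finset (Fin n) := insert a t with hs1
    set s2 : Finset (Fin n) := insert b t with hs2
    have hs1card : s1.card = k := by
      rw [hs1, Finset.card_insert_of_notMem hat, htcard]; omega
    have hs2card : s2.card = k := by
      rw [hs2, Finset.card_insert_of_notMem hbt, htcard]; omega
    set g1 : F[X] := ∏ i ∈ s1, (X - C (α i)) with hg1
    set g2 : F[X] := ∏ i ∈ s2, (X - C (α i)) with hg2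
    have hg1c : g1.coeff (k - r) = (-1) ^ r * ∑ u ∈ s1.powersetCard r, ∏ i ∈ u, α i := by
      have := aux_coeff_prod_X_sub_C s1 α (r := r) (by omega)
      rwa [hs1card] at this
    have hg2c : g2.coeff (k - r) = (-1) ^ r * ∑ u ∈ s2.powersetCard r, ∏ i ∈ u, α i := by
      have := aux_coeff_prod_X_sub_C s2 α (r := r) (by omega)
      rwa [hs2card] at this
    set c1 : F := g1.coeff (k - r) with hc1
    set c2 : F := g2.coeff (k - r) with hc2
    have hc1ne : c1 ≠ 0 := by
      rw [hg1c]
      exact mul_ne_zero (pow_ne_zero _ (neg_ne_zero.mpr one_ne_zero)) (hsym s1 hs1card)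
    have hc2ne : c2 ≠ 0 := by
      rw [hg2c]
      exact mul_ne_zero (pow_ne_zero _ (neg_ne_zero.mpr one_ne_zero)) (hsym s2 hs2card)
    set f : F[X] := C c2 * g1 - C c1 * g2 with hf
    have hg1deg : g1.natDegree = k := by
      rw [hg1, Polynomial.natDegree_prod _ _ fun i _ => Polynomial.X_sub_C_ne_zero _]
      simp [hs1card]
    have hg2deg : g2.natDegree = k := by
      rw [hg2, Polynomial.natDegree_prod _ _ fun i _ => Polynomial.X_sub_C_ne_zero _]
      simp [hs2card]
    have hfdeg : f.natDegree ≤ k := by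
      apply le_trans (Polynomial.natDegree_sub_le _ _)
      apply max_le
      · exact le_trans (Polynomial.natDegree_C_mul_le _ _) (le_of_eq hg1deg)
      · exact le_trans (Polynomial.natDegree_C_mul_le _ _) (le_of_eq hg2deg)
    have hfcoeff : f.coeff (k - r) = 0 := by
      rw [hf, Polynomial.coeff_sub, Polynomial.coeff_C_mul, Polynomial.coeff_C_mul,
        ← hc1, ← hc2]
      ring
    have hfV : f ∈ V := aux_mem_monomialSpace hrk' f hfdeg hfcoeff
    have hg2b : g2.eval (α b) = 0 := by
      rw [hg2, Polynomial.eval_prod]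
      apply Finset.prod_eq_zero (Finset.mem_insert_self b t)
      simp
    have hg1b : g1.eval (α b) ≠ 0 := by
      rw [hg1, Polynomial.eval_prod]
      apply Finset.prod_ne_zero_iff.mpr
      intro i hi
      simp only [Polynomial.eval_sub, Polynomial.eval_X, Polynomial.eval_C]
      rw [sub_ne_zero]
      intro h
      have hbi : b = i := hα h
      rcases Finset.mem_insert.mp hi with h' | h'
      · exact hab (by rw [hbi, h'])
      · exact hbt (hbi ▸ h')
    have hfb : f.eval (α b) ≠ 0 := by
      rw [hf]
      simp only [Polynomial.eval_sub, Polynomial.eval_mul, Polynomial.eval_C, hg2b, mul_zero,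
        sub_zero]
      exact mul_ne_zero hc2ne hg1b
    have hf0 : f ≠ 0 := fun h => hfb (by rw [h, Polynomial.eval_zero])
    refine ⟨ev f, ⟨f, hfV, rfl⟩, ?_, ?_⟩
    · intro h
      apply hfb
      have := congrFun h b
      rwa [hev_apply] at this
    · rw [show (LinearMap.pi fun i => Polynomial.leval (α i)) f = ev f from rfl] at *
      rw [hnorm f]
      have hle := hroots f hfV hf0
      have hge : k - 1 ≤ (Finset.univ.filter fun i => f.eval (α i) = 0).card := by
        rw [← htcard]
        apply Finset.card_le_card
        intro i hi
        rw [Finset.mem_filter]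
        refine ⟨Finset.mem_univ _, ?_⟩
        have hz1 : g1.eval (α i) = 0 := by
          rw [hg1, Polynomial.eval_prod]
          apply Finset.prod_eq_zero (Finset.mem_insert_of_mem hi)
          simp
        have hz2 : g2.eval (α i) = 0 := by
          rw [hg2, Polynomial.eval_prod]
          apply Finset.prod_eq_zero (Finset.mem_insert_of_mem hi)
          simp
        rw [hf]
        simp [hz1, hz2]
      omega
end

section
/- Let p be a prime, q = p^m, F_q = F_p(ζ) with basis {1,ζ,…,ζ^{m-1}}, let k ≥ 3 and 1 ≤ r ≤ k-1 with p ∤ C(k,r), and let t = ⌊(m-1)/r⌋. Let α₁,…,αₙ be distinct elements of F_q of the form αᵢ = 1 + Σ_{j=1}^{t} a_{i,j} ζ^j with a_{i,j} ∈ F_p. Then for any 1 ≤ i₁ < ⋯ < i_k ≤ n, the r-th elementary symmetric function e_r(α_{i₁},…,α_{i_k}) is nonzero. -/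
theorem elem_sym_ne_zero_of_coord_one {p m n k r : ℕ} [Fact p.Prime]
    {F : Type*} [Field F] [Fintype F] [Algebra (ZMod p) F]
    (hcard : Fintype.card F = p ^ m)
    (ζ : F) (b : Module.Basis (Fin m) (ZMod p) F) (hb : ∀ j : Fin m, b j = ζ ^ (j : ℕ))
    (hk : 3 ≤ k) (hr : 1 ≤ r) (hrk : r ≤ k - 1)
    (hbinom : ¬ p ∣ Nat.choose k r)
    (α : Fin n → F) (hα : Function.Injective α)
    (hform : ∀ i : Fin n, ∃ a : ℕ → ZMod p,
      α i = 1 + ∑ j ∈ Finset.Icc 1 ((m - 1) / r), a j • ζ ^ j) :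
    ∀ s : Finset (Fin n), s.card = k →
      ∑ t ∈ s.powersetCard r, ∏ i ∈ t, α i ≠ 0 := by
  intro s hs
  have hm : 0 < m := by
    by_contra h
    push_neg at h
    interval_cases m
    rw [pow_zero] at hcard
    have := Fintype.one_lt_card (α := F)
    omega
  -- submodules
  set t0 := (m - 1) / r with ht0
  let Mb : ℕ → Submodule (ZMod p) F :=
    fun a => Submodule.span (ZMod p) {x | ∃ j ∈ Finset.Icc 1 a, x = ζ ^ j}
  have hmono : ∀ a b', a ≤ b' → Mb a ≤ Mb b' := by
    intro a b' hab
    apply Submodule.span_mono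
    rintro x ⟨j, hj, rfl⟩
    exact ⟨j, by simp_all [Finset.mem_Icc]; omega, rfl⟩
  have hmul : ∀ a b' (x y : F), x ∈ Mb a → y ∈ Mb b' → x * y ∈ Mb (a + b') := by
    intro a b' x y hx hy
    have h1 : x * y ∈ Mb a * Mb b' := Submodule.mul_mem_mul hx hy
    have h2 : Mb a * Mb b' ≤ Mb (a + b') := by
      rw [Submodule.span_mul_span]
      apply Submodule.span_le.mpr
      rintro z ⟨u, ⟨j, hj, rfl⟩, v, ⟨j', hj', rfl⟩, rfl⟩
      simp only [Finset.mem_Icc] at hj hj'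
      exact Submodule.subset_span ⟨j + j', by simp [Finset.mem_Icc]; omega, (pow_add ζ j j').symm⟩
    exact h2 h1
  -- coordinate functional
  let c : F →ₗ[ZMod p] ZMod p := b.coord ⟨0, hm⟩
  have hc1 : c 1 = 1 := by
    have h1 : (1 : F) = b ⟨0, hm⟩ := by rw [hb]; simp
    rw [h1]
    simp [c, Module.Basis.coord_apply]
  have hcM : ∀ x ∈ Mb (m - 1), c x = 0 := by
    intro x hx
    have : Mb (m - 1) ≤ LinearMap.ker c := by
      apply Submodule.span_le.mpr
      rintro z ⟨j, hj, rfl⟩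
      simp only [Finset.mem_Icc] at hj
      have hjm : j < m := by omega
      have : ζ ^ j = b ⟨j, hjm⟩ := (hb ⟨j, hjm⟩).symm
      rw [SetLike.mem_coe, LinearMap.mem_ker, this]
      simp only [c, Module.Basis.coord_apply, Module.Basis.repr_self]
      rw [Finsupp.single_apply]
      have : (⟨j, hjm⟩ : Fin m) ≠ ⟨0, hm⟩ := by
        simp [Fin.ext_iff]; omega
      simp [this]
    exact LinearMap.mem_ker.mp (this hx)
  -- each α i minus 1 is in Mb t0
  have hαM : ∀ i, α i - 1 ∈ Mb t0 := by
    intro i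
    obtain ⟨a, ha⟩ := hform i
    rw [ha, add_sub_cancel_left]
    apply Submodule.sum_mem
    intro j hj
    exact Submodule.smul_mem _ _ (Submodule.subset_span ⟨j, hj, rfl⟩)
  -- product over u minus 1 is in Mb (u.card * t0)
  have hprod : ∀ u : Finset (Fin n), (∏ i ∈ u, α i) - 1 ∈ Mb (u.card * t0) := by
    intro u
    induction u using Finset.induction with
    | empty => simp
    | @insert i u0 hx ih =>
      rw [Finset.prod_insert hx, Finset.card_insert_of_notMem hx]
      have key : α i * (∏ j ∈ u0, α j) - 1 =
          (α i - 1) * ((∏ j ∈ u0, α j) - 1) + (α i - 1) + ((∏ j ∈ u0, α j) - 1) := by ring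
      rw [key]
      have h1 := hmul _ _ _ _ (hαM i) ih
      have h2 : (u0.card + 1) * t0 = t0 + u0.card * t0 := by ring
      rw [h2]
      exact Submodule.add_mem _ (Submodule.add_mem _ h1
        (hmono _ _ (Nat.le_add_right _ _) (hαM i)))
        (hmono _ _ (Nat.le_add_left _ _) ih)
  -- c of each product is 1
  have hcprod : ∀ u : Finset (Fin n), u.card = r → c (∏ i ∈ u, α i) = 1 := by
    intro u hu
    have h1 : (∏ i ∈ u, α i) - 1 ∈ Mb (m - 1) := by
      refine hmono _ _ ?_ (hu ▸ hprod u)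
      calc r * t0 = t0 * r := Nat.mul_comm _ _
        _ ≤ m - 1 := Nat.div_mul_le_self _ _
    have := hcM _ h1
    have h2 : c ((∏ i ∈ u, α i) - 1) = c (∏ i ∈ u, α i) - c 1 := map_sub _ _ _
    rw [h2, hc1, sub_eq_zero] at this
    exact this
  intro h0
  have hsum : c (∑ t ∈ s.powersetCard r, ∏ i ∈ t, α i) = (Nat.choose k r : ZMod p) := by
    rw [map_sum]
    rw [Finset.sum_congr rfl (fun u hu => hcprod u (Finset.mem_powersetCard.mp hu).2)]
    rw [Finset.sum_const, Finset.card_powersetCard, hs, nsmul_eq_mul, mul_one]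
  rw [h0, map_zero] at hsum
  have : (p : ℕ) ∣ Nat.choose k r := by
    rwa [eq_comm, ZMod.natCast_eq_zero_iff] at hsum
  exact hbinom this
end

section
/- Let q be a prime power and 3 ≤ k ≤ n/2. Suppose I ⊆ ℕ is a set of size k that is not an arithmetic progression, and T ⊆ F_q with |T| = n is such that every nonzero f ∈ V_I = span_{F_q}{x^i : i ∈ I} has at most k-1 roots in T, and additionally m_I = max I satisfies max(I+I) ≤ q-2 so that distinct monomials x^j, j ∈ I+I, restricted to T, together with n ≥ |I+I| evaluation points, yield a code of dimension |I+I|. Then the code C(T,I) = {(f(α))_{α∈T} : f ∈ V_I} is an [n,k] MDS code whose Schur square has dimension ≥ 2k, and hence C(T,I) is not a generalized Reed–Solomon code. -/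
open Pointwise

/-- A finite set of naturals is an arithmetic progression if it is of the form
`{a, a + d, a + 2d, …, a + (ℓ-1)d}`. -/
def IsAPSet (I : Finset ℕ) : Prop :=
  ∃ a d : ℕ, I = (Finset.range I.card).image (fun j => a + j * d)

lemma liXpow (F : Type*) [Field F] (I : Finset ℕ) :
    LinearIndependent F (fun i : {x // x ∈ I} => (Polynomial.X : Polynomial F) ^ (i : ℕ)) := by
  rw [linearIndependent_iff']
  intro s g hsum i hi
  have := congrArg (fun p => Polynomial.coeff p (i : ℕ)) hsum
  simp only [Polynomial.finset_sum_coeff, Polynomial.coeff_smul, Polynomial.coeff_X_pow,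
    Polynomial.coeff_zero, smul_eq_mul] at this
  rwa [Finset.sum_eq_single i (fun j _ hj => by
      rw [if_neg (fun h => hj (Subtype.ext h.symm)), mul_zero])
    (fun h => absurd hi h), if_pos rfl, mul_one] at this

lemma freiman {I : Finset ℕ} {k : ℕ} (hk : 3 ≤ k) (hI : I.card = k)
    (hAP : ¬ IsAPSet I) : 2 * k ≤ (I + I).card := by
  by_contra hcard
  push_neg at hcard
  apply hAP
  -- the sorted enumeration of I
  set e := I.orderIsoOfFin hI with he
  set a : ℕ → ℕ := fun i =>
    if h : i < k then (e ⟨i, h⟩ : ℕ) else (e ⟨k - 1, by omega⟩ : ℕ) + (i - (k - 1)) with ha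
  have haI : ∀ i < k, a i ∈ I := by
    intro i hi
    simp only [ha, dif_pos hi]
    exact (e ⟨i, hi⟩).2
  have hamono : StrictMono a := by
    apply strictMono_nat_of_lt_succ
    intro i
    rcases lt_trichotomy (i + 1) k with h | h | h
    · have hi : i < k := by omega
      simp only [ha, dif_pos hi, dif_pos h]
      exact_mod_cast e.strictMono (by simp [Fin.lt_def])
    · have hi : i < k := by omega
      have : i = k - 1 := by omega
      subst this
      simp only [ha, dif_pos hi, dif_neg (by omega : ¬ k - 1 + 1 < k)]
      have : (⟨k - 1, hi⟩ : Fin k) = ⟨k - 1, by omega⟩ := rfl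
      rw [this]
      omega
    · simp only [ha, dif_neg (by omega : ¬ i < k), dif_neg (by omega : ¬ i + 1 < k)]
      omega
  -- the chain
  set g : ℕ → ℕ := fun m => a (m / 2) + a ((m + 1) / 2) with hg
  have hgmono : StrictMono g := by
    apply strictMono_nat_of_lt_succ
    intro m
    have h1 : (m + 2) / 2 = m / 2 + 1 := by omega
    have h2 : a (m / 2) < a (m / 2 + 1) := hamono (by omega)
    simp only [hg, show m + 1 + 1 = m + 2 from rfl, h1]
    omega
  set S : Finset ℕ := (Finset.range (2 * k - 1)).image g with hS
  have hScard : S.card = 2 * k - 1 := by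
    rw [hS, Finset.card_image_of_injective _ hgmono.injective, Finset.card_range]
  have hSsub : S ⊆ I + I := by
    intro x hx
    rw [hS, Finset.mem_image] at hx
    obtain ⟨m, hm, rfl⟩ := hx
    rw [Finset.mem_range] at hm
    exact Finset.add_mem_add (haI _ (by omega)) (haI _ (by omega))
  have heq : I + I = S := (Finset.eq_of_subset_of_card_le hSsub (by omega)).symm
  -- second differences
  have hkey : ∀ i, 1 ≤ i → i + 1 < k → a (i - 1) + a (i + 1) = 2 * a i := by
    intro i h1 h2
    have hx : a (i - 1) + a (i + 1) ∈ S := by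
      rw [← heq]
      exact Finset.add_mem_add (haI _ (by omega)) (haI _ (by omega))
    rw [hS, Finset.mem_image] at hx
    obtain ⟨m, hm, hmx⟩ := hx
    have hlo : g (2 * i - 1) < a (i - 1) + a (i + 1) := by
      have e1 : (2 * i - 1) / 2 = i - 1 := by omega
      have e2 : (2 * i - 1 + 1) / 2 = i := by omega
      simp only [hg, e1, e2]
      have := hamono (show i < i + 1 by omega)
      omega
    have hhi : a (i - 1) + a (i + 1) < g (2 * i + 1) := by
      have e1 : (2 * i + 1) / 2 = i := by omega
      have e2 : (2 * i + 1 + 1) / 2 = i + 1 := by omega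
      simp only [hg, e1, e2]
      have := hamono (show i - 1 < i by omega)
      omega
    have hm1 : 2 * i - 1 < m := by
      by_contra hc
      push_neg at hc
      exact absurd (hgmono.monotone hc) (by omega)
    have hm2 : m < 2 * i + 1 := by
      by_contra hc
      push_neg at hc
      exact absurd (hgmono.monotone hc) (by omega)
    have : m = 2 * i := by omega
    subst this
    have e1 : 2 * i / 2 = i := by omega
    have e2 : (2 * i + 1) / 2 = i := by omega
    simp only [hg, e1, e2] at hmx
    omega
  set d := a 1 - a 0 with hd
  have hstep : ∀ j, j + 1 < k → a (j + 1) = a j + d := by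
    intro j hj
    induction j with
    | zero =>
      show a 1 = a 0 + d
      have := hamono (show 0 < 1 by omega); omega
    | succ i ih =>
      have hi := ih (by omega)
      have := hkey (i + 1) (by omega) (by omega)
      simp only [Nat.add_sub_cancel] at this
      omega
  have hval : ∀ j, j < k → a j = a 0 + j * d := by
    intro j hj
    induction j with
    | zero => omega
    | succ i ih =>
      have := hstep i (by omega)
      have h2 := ih (by omega)
      rw [this, h2]; ring
  refine ⟨a 0, d, ?_⟩
  rw [hI]
  have hd0 : 0 < d := by have := hamono (show 0 < 1 by omega); omega
  refine (Finset.eq_of_subset_of_card_le ?_ ?_).symm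
  · intro x hx
    rw [Finset.mem_image] at hx
    obtain ⟨j, hj, rfl⟩ := hx
    rw [Finset.mem_range] at hj
    rw [← hval j hj]
    exact haI j hj
  · have hinj : Function.Injective (fun j : ℕ => a 0 + j * d) := by
      intro x y hxy
      simp only at hxy
      have : x * d = y * d := by omega
      exact Nat.eq_of_mul_eq_mul_right hd0 this
    rw [Finset.card_image_of_injective _ hinj, Finset.card_range, hI]


theorem evalCode_nonRS_MDS {F : Type*} [Field F] [Fintype F] [DecidableEq F]
    {n k q : ℕ} (hq : Fintype.card F = q) (hk : 3 ≤ k) (hkn : 2 * k ≤ n)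
    (I : Finset ℕ) (hI : I.card = k) (hAP : ¬ IsAPSet I)
    (α : Fin n → F) (hα : Function.Injective α)
    (hroots : ∀ f ∈ monomialSpace F I, f ≠ 0 →
      (Finset.univ.filter fun i => Polynomial.eval (α i) f = 0).card ≤ k - 1)
    (hmax : ∀ j ∈ I + I, j ≤ q - 2) (hcardII : (I + I).card ≤ n)
    (hind : LinearIndependent F
      (fun j : (I + I : Finset ℕ) => (fun i : Fin n => (α i) ^ (j : ℕ)))) :
    Module.finrank F (evalCode α (monomialSpace F I)) = k ∧
      (∀ c ∈ evalCode α (monomialSpace F I), c ≠ 0 → n - k + 1 ≤ hammingNorm c) ∧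
      (∃ c ∈ evalCode α (monomialSpace F I), c ≠ 0 ∧ hammingNorm c = n - k + 1) ∧
      2 * k ≤ Module.finrank F (schurSq (evalCode α (monomialSpace F I))) ∧
      ∀ (β v : Fin n → F), Function.Injective β → (∀ i, v i ≠ 0) →
        evalCode α (monomialSpace F I) ≠ grs k β v := by
  set V := monomialSpace F I with hV
  set L := (LinearMap.pi fun i : Fin n => Polynomial.leval (α i) :
    Polynomial F →ₗ[F] (Fin n → F)) with hL
  have hLapp : ∀ (f : Polynomial F) (i : Fin n), L f i = Polynomial.eval (α i) f :=
    fun f i => rfl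
  haveI : FiniteDimensional F V :=
    FiniteDimensional.span_of_finite F ((I.finite_toSet).image _)
  -- dimension of V
  have hVrank : Module.finrank F V = k := by
    have h1 : ((fun i => (Polynomial.X : Polynomial F) ^ i) '' (I : Set ℕ)) =
        Set.range (fun i : {x // x ∈ I} => (Polynomial.X : Polynomial F) ^ (i : ℕ)) := by
      ext p
      simp [Set.mem_image, Set.mem_range, Subtype.exists]
    rw [hV, monomialSpace, h1, finrank_span_eq_card (liXpow F I), Fintype.card_coe, hI]
  -- injectivity of evaluation on V
  have hker : ∀ f ∈ V, L f = 0 → f = 0 := by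
    intro f hf h0
    by_contra hne
    have hfil : (Finset.univ.filter fun i => Polynomial.eval (α i) f = 0) = Finset.univ := by
      apply Finset.filter_true_of_mem
      intro i _
      rw [← hLapp, h0]; rfl
    have := hroots f hf hne
    rw [hfil, Finset.card_univ, Fintype.card_fin] at this
    omega
  -- weight of nonzero codewords
  have hwt : ∀ f ∈ V, f ≠ 0 →
      hammingNorm (L f) + (Finset.univ.filter fun i => Polynomial.eval (α i) f = 0).card = n := by
    intro f hf hne
    have := Finset.card_filter_add_card_filter_not
      (s := (Finset.univ : Finset (Fin n))) (p := fun i => Polynomial.eval (α i) f = 0)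
    rw [Finset.card_univ, Fintype.card_fin] at this
    have hnorm : hammingNorm (L f) =
        (Finset.univ.filter fun i => ¬ Polynomial.eval (α i) f = 0).card := by
      unfold hammingNorm
      rfl
    omega
  have part1 : Module.finrank F (evalCode α V) = k := by
    have hinj : Function.Injective (L.domRestrict V) := by
      rw [← LinearMap.ker_eq_bot, eq_bot_iff]
      rintro ⟨f, hf⟩ hfker
      rw [Submodule.mem_bot]
      exact Subtype.ext (hker f hf (LinearMap.mem_ker.mp hfker))
    have hrange : LinearMap.range (L.domRestrict V) = evalCode α V := by
      rw [LinearMap.range_domRestrict]; rfl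
    rw [← hrange, ← (LinearEquiv.ofInjective (L.domRestrict V) hinj).finrank_eq, hVrank]
  have part2 : ∀ c ∈ evalCode α V, c ≠ 0 → n - k + 1 ≤ hammingNorm c := by
    rintro c hc hc0
    obtain ⟨f, hf, hcf⟩ := hc
    have hcf' : c = L f := hcf.symm
    subst hcf'
    have hne : f ≠ 0 := by rintro rfl; exact hc0 (map_zero L)
    have h1 := hwt f hf hne
    have h2 := hroots f hf hne
    omega
  have part3 : ∃ c ∈ evalCode α V, c ≠ 0 ∧ hammingNorm c = n - k + 1 := by
    have h1 : k - 1 ≤ n := by omega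
    set E := (LinearMap.pi fun i : Fin (k-1) =>
      Polynomial.leval (α (Fin.castLE h1 i)) : Polynomial F →ₗ[F] (Fin (k-1) → F)).domRestrict V
      with hE
    have hkerE : LinearMap.ker E ≠ ⊥ := by
      intro hbot
      have hinj := LinearMap.ker_eq_bot.mp hbot
      have := LinearMap.finrank_le_finrank_of_injective hinj
      rw [hVrank, Module.finrank_pi, Fintype.card_fin] at this
      omega
    obtain ⟨f, hfker, hf0⟩ := Submodule.exists_mem_ne_zero_of_ne_bot hkerE
    have hf1 : (f : Polynomial F) ≠ 0 := by
      simpa [Submodule.coe_eq_zero] using hf0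
    have hfroots : ∀ i : Fin (k-1), Polynomial.eval (α (Fin.castLE h1 i)) (f : Polynomial F) = 0 := by
      intro i
      have := LinearMap.mem_ker.mp hfker
      exact congr_fun this i
    set Z := (Finset.univ.filter fun i => Polynomial.eval (α i) (f : Polynomial F) = 0) with hZ
    have hZcard : Z.card = k - 1 := by
      have hle := hroots f f.2 hf1
      have hsub : Finset.univ.image (Fin.castLE h1) ⊆ Z := by
        intro x hx
        rw [Finset.mem_image] at hx
        obtain ⟨i, _, rfl⟩ := hx
        rw [hZ, Finset.mem_filter]
        exact ⟨Finset.mem_univ _, hfroots i⟩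
      have := Finset.card_le_card hsub
      rw [Finset.card_image_of_injective _ (Fin.castLE_injective h1),
        Finset.card_univ, Fintype.card_fin] at this
      rw [← hZ] at hle
      omega
    refine ⟨L f, ⟨f, f.2, rfl⟩, ?_, ?_⟩
    · intro h0
      exact hf1 (hker f f.2 h0)
    · have := hwt f f.2 hf1
      rw [← hZ] at this
      omega
  have part4 : 2 * k ≤ Module.finrank F (schurSq (evalCode α V)) := by
    have h2k := freiman hk hI hAP
    have hw : ∀ j : (I + I : Finset ℕ),
        (fun i : Fin n => (α i) ^ (j : ℕ)) ∈ schurSq (evalCode α V) := by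
      rintro ⟨j, hj⟩
      rw [Finset.mem_add] at hj
      obtain ⟨b, hb, c, hc, rfl⟩ := hj
      apply Submodule.subset_span
      refine ⟨L (Polynomial.X ^ b),
        ⟨Polynomial.X ^ b, Submodule.subset_span ⟨b, hb, rfl⟩, rfl⟩,
        L (Polynomial.X ^ c),
        ⟨Polynomial.X ^ c, Submodule.subset_span ⟨c, hc, rfl⟩, rfl⟩, ?_⟩
      funext i
      simp only [Pi.mul_apply, hLapp, Polynomial.eval_pow, Polynomial.eval_X, pow_add]
    have hle : Submodule.span F (Set.range fun j : (I + I : Finset ℕ) =>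
        (fun i : Fin n => (α i) ^ (j : ℕ))) ≤ schurSq (evalCode α V) :=
      Submodule.span_le.mpr (Set.range_subset_iff.mpr hw)
    have hrk := finrank_span_eq_card hind
    rw [Fintype.card_coe] at hrk
    calc 2 * k ≤ (I + I).card := h2k
      _ = _ := hrk.symm
      _ ≤ _ := Submodule.finrank_mono hle
  refine ⟨part1, part2, part3, part4, ?_⟩
  intro β v hβ hv heqgrs
  set L₂ := (LinearMap.pi fun i : Fin n => (v i ^ 2) • Polynomial.leval (β i) :
    Polynomial F →ₗ[F] (Fin n → F)) with hL2
  haveI : Module.Finite F (Polynomial.degreeLT F (2 * k - 1)) :=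
    Module.Finite.equiv (Polynomial.degreeLTEquiv F (2 * k - 1)).symm
  set L₁ := (LinearMap.pi fun i : Fin n => (v i) • Polynomial.leval (β i) :
    Polynomial F →ₗ[F] (Fin n → F)) with hL1
  have hdeg : ∀ f : Polynomial F, f.natDegree < k ↔ f.degree < (k : ℕ) := by
    intro f
    rcases eq_or_ne f 0 with rfl | h
    · simp only [Polynomial.natDegree_zero, Polynomial.degree_zero]
      exact ⟨fun _ => WithBot.bot_lt_coe _, fun _ => by omega⟩
    · exact Polynomial.natDegree_lt_iff_degree_lt h
  have hsetaeq : {c | ∃ f : Polynomial F, f.natDegree < k ∧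
      c = fun i => v i * Polynomial.eval (β i) f} =
      ⇑L₁ '' ↑(Polynomial.degreeLT F k) := by
    ext c
    constructor
    · rintro ⟨f, hf, rfl⟩
      refine ⟨f, ?_, ?_⟩
      · rw [SetLike.mem_coe, Polynomial.mem_degreeLT]
        exact (hdeg f).mp hf
      · funext i
        simp only [hL1, LinearMap.pi_apply, LinearMap.smul_apply, Polynomial.leval_apply,
          smul_eq_mul]
    · rintro ⟨f, hf, rfl⟩
      rw [SetLike.mem_coe, Polynomial.mem_degreeLT] at hf
      refine ⟨f, (hdeg f).mpr hf, ?_⟩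
      funext i
      simp only [hL1, LinearMap.pi_apply, LinearMap.smul_apply, Polynomial.leval_apply,
        smul_eq_mul]
  have hgrseq : grs k β v = Submodule.map L₁ (Polynomial.degreeLT F k) := by
    rw [grs, hsetaeq, ← Submodule.map_span, Submodule.span_eq]
  have hgrs : ∀ c ∈ grs k β v, ∃ f : Polynomial F, f.natDegree < k ∧
      c = fun i => v i * Polynomial.eval (β i) f := by
    intro c hc
    rw [hgrseq] at hc
    obtain ⟨f, hf, rfl⟩ := hc
    rw [SetLike.mem_coe, Polynomial.mem_degreeLT] at hf
    refine ⟨f, (hdeg f).mpr hf, ?_⟩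
    funext i
    simp only [hL1, LinearMap.pi_apply, LinearMap.smul_apply, Polynomial.leval_apply,
      smul_eq_mul]
  have hss : schurSq (grs k β v) ≤
      Submodule.map L₂ (Polynomial.degreeLT F (2 * k - 1)) := by
    apply Submodule.span_le.mpr
    rintro x ⟨c, hc, c', hc', rfl⟩
    obtain ⟨f, hf, rfl⟩ := hgrs c hc
    obtain ⟨g, hg, rfl⟩ := hgrs c' hc'
    refine ⟨f * g, ?_, ?_⟩
    · show f * g ∈ Polynomial.degreeLT F (2 * k - 1)
      rw [Polynomial.mem_degreeLT]
      rcases eq_or_ne (f * g) 0 with h | h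
      · rw [h, Polynomial.degree_zero]
        exact WithBot.bot_lt_coe _
      · rw [← Polynomial.natDegree_lt_iff_degree_lt h]
        have := Polynomial.natDegree_mul_le (p := f) (q := g)
        omega
    · funext i
      simp only [hL2, LinearMap.pi_apply, LinearMap.smul_apply, Polynomial.leval_apply,
        Polynomial.eval_mul, Pi.mul_apply, smul_eq_mul]
      ring
  have hfin : Module.finrank F (schurSq (grs k β v)) ≤ 2 * k - 1 := by
    calc Module.finrank F (schurSq (grs k β v))
        ≤ Module.finrank F (Submodule.map L₂ (Polynomial.degreeLT F (2 * k - 1))) :=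
          Submodule.finrank_mono hss
      _ ≤ Module.finrank F (Polynomial.degreeLT F (2 * k - 1)) :=
          Submodule.finrank_map_le _ _
      _ = 2 * k - 1 := by
          rw [(Polynomial.degreeLTEquiv F (2 * k - 1)).finrank_eq, Module.finrank_pi,
            Fintype.card_fin]
  rw [heqgrs] at part4
  omega
end
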